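/- arXiv:2307.01696 — 4 statements merged into one kernel-verified Lean document; each statement's English description precedes it below -/
import Mathlib

section
/- Let A : Fin d → Matrix (Fin D) (Fin D) ℂ be an MPS tensor and v_N the unnormalized translation-invariant MPS on N sites generated by A. Then for every N ≥ 1, the squared Euclidean norm of v_N equals the trace of the N-th power of the transfer matrix: ∑_{i : Fin N → Fin d} |Tr(A^{i₁} ⋯ A^{i_N})|² = Tr(E_A^N). -/
open Matrix Kronecker

/-- The transfer matrix `E_A = ∑ i, conj (A i) ⊗ₖ A i` of an MPS tensor. -/
noncomputable def transferMatrix {d D : ℕ} (A : Fin d → Matrix (Fin D) (Fin D) ℂ) :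
    Matrix (Fin D × Fin D) (Fin D × Fin D) ℂ :=
  ∑ i, (A i).map (starRingEnd ℂ) ⊗ₖ A i

/-- The unnormalized translation-invariant MPS on `N` sites generated by a tensor `A`:
`v_N (i₁, …, i_N) = Tr (A^{i₁} ⋯ A^{i_N})`. -/
noncomputable def mpsVec {σ : Type*} {D : ℕ} (A : σ → Matrix (Fin D) (Fin D) ℂ) (N : ℕ) :
    (Fin N → σ) → ℂ :=
  fun x => ((List.ofFn fun k => A (x k)).prod).trace

/-- A power of a finite sum in a ring expands as a sum over words. -/
lemma pow_sum_eq_sum_listProd {ι M : Type*} [Fintype ι] [Semiring M] (f : ι → M) :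
    ∀ N : ℕ, (∑ i, f i) ^ N = ∑ x : Fin N → ι, (List.ofFn fun k => f (x k)).prod := by
  intro N
  induction N with
  | zero => simp
  | succ n ih =>
    rw [pow_succ', ih, Finset.mul_sum, ← (Fin.insertNthEquiv (fun _ => ι) 0).symm.symm.sum_comp]
    rw [Fintype.sum_prod_type, Finset.sum_comm]
    refine Finset.sum_congr rfl fun x _ => ?_
    rw [Finset.sum_mul]
    refine Finset.sum_congr rfl fun i _ => ?_
    simp [Equiv.symm_symm, List.ofFn_succ, Fin.insertNthEquiv]

/-- Product of a list of Kronecker products. -/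
lemma listProd_kronecker {D : ℕ} {N : ℕ} (B C : Fin N → Matrix (Fin D) (Fin D) ℂ) :
    (List.ofFn fun k => B k ⊗ₖ C k).prod
      = (List.ofFn B).prod ⊗ₖ (List.ofFn C).prod := by
  induction N with
  | zero => simp [Matrix.one_kronecker_one]
  | succ n ih =>
    simp only [List.ofFn_succ, List.prod_cons, ih, Matrix.mul_kronecker_mul]

/-- the squared Euclidean norm of the unnormalized translation-invariant MPS on
`N ≥ 1` sites equals the trace of the `N`-th power of the transfer matrix. -/
theorem mps_normSq_eq_trace_transferMatrix_pow {d D : ℕ}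
    (A : Fin d → Matrix (Fin D) (Fin D) ℂ) (N : ℕ) (hN : 1 ≤ N) :
    ∑ x : Fin N → Fin d, (starRingEnd ℂ) (mpsVec A N x) * mpsVec A N x
      = (transferMatrix A ^ N).trace := by
  rw [transferMatrix, pow_sum_eq_sum_listProd, trace_sum]
  refine Finset.sum_congr rfl fun x _ => ?_
  rw [listProd_kronecker, Matrix.trace_kronecker]
  have h2 : (List.ofFn fun k => (A (x k)).map (starRingEnd ℂ)).prod
      = ((List.ofFn fun k => A (x k)).prod).map (starRingEnd ℂ) := by
    have := map_list_prod ((starRingEnd ℂ).mapMatrix (m := Fin D))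
      (List.ofFn fun k => A (x k))
    simpa [RingHom.mapMatrix_apply, List.map_ofFn, Function.comp_def] using this.symm
  rw [h2]
  have h3 : (((List.ofFn fun k => A (x k)).prod).map (starRingEnd ℂ)).trace
      = (starRingEnd ℂ) ((List.ofFn fun k => A (x k)).prod).trace := by
    simp [Matrix.trace, Matrix.diag, map_sum]
  rw [h3, mpsVec]
end

section
/- Let A : Fin d → Matrix (Fin D) (Fin D) ℂ be an MPS tensor, v_N the unnormalized translation-invariant MPS on N sites generated by A, and for each k ∈ Fin N let Q_k be a d×d complex matrix. Then the matrix element of the product of single-site operators equals a trace of generalized transfer matrices: ∑_{i, j : Fin N → Fin d} conj(v_N(i)) · (∏_{k=1}^{N} (Q_k)_{i_k j_k}) · v_N(j) = Tr(E_{Q_1} E_{Q_2} ⋯ E_{Q_N}). -/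
open Matrix Kronecker

lemma aux_sum {R σ : Type*} [Semiring R] [Fintype σ] :
    ∀ {N : ℕ} (M : Fin N → σ → R),
      (List.ofFn fun k => ∑ i, M k i).prod
        = ∑ x : Fin N → σ, (List.ofFn fun k => M k (x k)).prod := by
  intro N
  induction N with
  | zero => intro M; simp
  | succ n ih =>
    intro M
    rw [List.ofFn_succ, List.prod_cons, ih, Finset.sum_mul_sum,
      ← ((Fin.consEquiv fun _ : Fin (n+1) => σ).sum_comp
        (fun y => (List.ofFn fun k => M k (y k)).prod))]
    rw [Fintype.sum_prod_type]
    refine Finset.sum_congr rfl fun i _ => Finset.sum_congr rfl fun x _ => ?_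
    simp [Fin.consEquiv, List.ofFn_succ, List.prod_cons]

lemma aux_kron {D : ℕ} :
    ∀ {N : ℕ} (f g : Fin N → Matrix (Fin D) (Fin D) ℂ),
      (List.ofFn f).prod ⊗ₖ (List.ofFn g).prod
        = (List.ofFn fun k => f k ⊗ₖ g k).prod := by
  intro N
  induction N with
  | zero => intro f g; simp
  | succ n ih =>
    intro f g
    simp only [List.ofFn_succ, List.prod_cons, Matrix.mul_kronecker_mul, ih]

lemma aux_smul {n : Type*} [Fintype n] [DecidableEq n] :
    ∀ {N : ℕ} (c : Fin N → ℂ) (B : Fin N → Matrix n n ℂ),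
      (List.ofFn fun k => c k • B k).prod = (∏ k, c k) • (List.ofFn B).prod := by
  intro N
  induction N with
  | zero => intro c B; simp
  | succ n ih =>
    intro c B
    simp only [List.ofFn_succ, List.prod_cons, ih, Fin.prod_univ_succ,
      smul_mul_smul_comm]

lemma aux_map {D : ℕ} :
    ∀ (l : List (Matrix (Fin D) (Fin D) ℂ)),
      (l.prod).map (starRingEnd ℂ) = (l.map (fun M => M.map (starRingEnd ℂ))).prod := by
  intro l
  induction l with
  | nil => simp
  | cons a t ih => simp [Matrix.map_mul, ih]

lemma aux_trace_conj {D : ℕ} (P : Matrix (Fin D) (Fin D) ℂ) :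
    (starRingEnd ℂ) P.trace = (P.map (starRingEnd ℂ)).trace := by
  simp [Matrix.trace, Matrix.diag, map_sum, Matrix.map_apply]

/-- The generalized transfer matrix `E_Q = ∑ i j, Q i j • (conj (A i) ⊗ₖ A j)` of an MPS tensor
with respect to a single-site operator `Q`. -/
noncomputable def genTransferMatrix {d D : ℕ} (A : Fin d → Matrix (Fin D) (Fin D) ℂ)
    (Q : Matrix (Fin d) (Fin d) ℂ) : Matrix (Fin D × Fin D) (Fin D × Fin D) ℂ :=
  ∑ i, ∑ j, Q i j • ((A i).map (starRingEnd ℂ) ⊗ₖ A j)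

/-- the matrix element of a product of single-site operators `Q_k` in the
unnormalized translation-invariant MPS equals the trace of the ordered product of the
generalized transfer matrices `E_{Q_k}`. -/
theorem mps_matrixElement_eq_trace_genTransfer {d D N : ℕ}
    (A : Fin d → Matrix (Fin D) (Fin D) ℂ) (Q : Fin N → Matrix (Fin d) (Fin d) ℂ) :
    ∑ x : Fin N → Fin d, ∑ y : Fin N → Fin d,
        (starRingEnd ℂ) (mpsVec A N x) * (∏ k, Q k (x k) (y k)) * mpsVec A N y
      = ((List.ofFn fun k => genTransferMatrix A (Q k)).prod).trace := by
  classical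
  have key : ∀ x : Fin N → Fin d × Fin d,
      ((List.ofFn fun k => Q k (x k).1 (x k).2 •
          ((A (x k).1).map (starRingEnd ℂ) ⊗ₖ A (x k).2)).prod).trace
        = (starRingEnd ℂ) (mpsVec A N (fun k => (x k).1)) * (∏ k, Q k (x k).1 (x k).2)
            * mpsVec A N (fun k => (x k).2) := by
    intro x
    rw [aux_smul, Matrix.trace_smul, ← aux_kron, Matrix.trace_kronecker]
    have h1 : (starRingEnd ℂ) (mpsVec A N fun k => (x k).1)
        = ((List.ofFn fun k => (A (x k).1).map (starRingEnd ℂ)).prod).trace := by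
      rw [mpsVec, aux_trace_conj, aux_map, List.map_ofFn]
      rfl
    rw [h1, mpsVec]
    simp only [smul_eq_mul]
    ring
  have hRHS : ((List.ofFn fun k => genTransferMatrix A (Q k)).prod).trace
      = ∑ x : Fin N → Fin d × Fin d,
          ((List.ofFn fun k => Q k (x k).1 (x k).2 •
            ((A (x k).1).map (starRingEnd ℂ) ⊗ₖ A (x k).2)).prod).trace := by
    have hl : (List.ofFn fun k => genTransferMatrix A (Q k))
        = List.ofFn fun k => ∑ p : Fin d × Fin d,
            Q k p.1 p.2 • ((A p.1).map (starRingEnd ℂ) ⊗ₖ A p.2) := by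
      congr 1
      funext k
      rw [genTransferMatrix, ← Fintype.sum_prod_type']
    rw [hl, aux_sum, Matrix.trace_sum]
  rw [hRHS, Finset.sum_congr rfl (fun x _ => key x), ← Fintype.sum_prod_type']
  refine Fintype.sum_equiv (Equiv.arrowProdEquivProdArrow (Fin N) (fun _ => Fin d) (fun _ => Fin d)).symm _ _
    (fun p => ?_)
  simp [Equiv.arrowProdEquivProdArrow]
end

section
/- Let E be an n×n complex matrix of the form E = v·wᴴ + R, where v, w ∈ ℂⁿ are column vectors with wᴴv = 1, R·v = 0, wᴴ·R = 0, and the spectral radius of R is strictly less than 1. Then for every n×n complex matrix X, the sequence N ↦ Tr(E^N · X) converges to wᴴ X v as N → ∞. -/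
open Matrix Filter

section norm_aux

attribute [local instance] Matrix.linftyOpNormedRing Matrix.linftyOpNormedAlgebra

lemma aux_norm_pow_tendsto_zero {n : ℕ} (R : Matrix (Fin n) (Fin n) ℂ)
    (hspec : ∀ μ ∈ spectrum ℂ R, ‖μ‖ < 1) :
    Tendsto (fun N : ℕ => ‖R ^ N‖) atTop (nhds 0) := by
  rcases Nat.eq_zero_or_pos n with h0 | hpos
  · subst h0
    have hsub : ∀ N : ℕ, R ^ N = 0 := fun N => Subsingleton.elim _ _
    simpa [hsub] using tendsto_const_nhds
  · haveI : Nontrivial (Matrix (Fin n) (Fin n) ℂ) := by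
      refine ⟨1, 0, fun h => ?_⟩
      have := congrFun (congrFun h ⟨0, hpos⟩) ⟨0, hpos⟩
      simp [Matrix.one_apply] at this
    have hρ : spectralRadius ℂ R < 1 := by
      have := spectrum.spectralRadius_lt_of_forall_lt (a := R) (r := 1)
        (fun z hz => by simpa [← NNReal.coe_lt_coe, coe_nnnorm] using hspec z hz)
      simpa using this
    obtain ⟨r, hr1, hr2⟩ := ENNReal.lt_iff_exists_nnreal_btwn.mp hρ
    have hr2' : (r : ℝ) < 1 := by exact_mod_cast hr2
    have hgel := spectrum.pow_nnnorm_pow_one_div_tendsto_nhds_spectralRadius R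
    have hev : ∀ᶠ N : ℕ in atTop, ((‖R ^ N‖₊ : ENNReal) ^ (1 / (N : ℝ))) < (r : ENNReal) :=
      hgel.eventually_lt_const hr1
    have hev2 : ∀ᶠ N : ℕ in atTop, ‖R ^ N‖ ≤ (r : ℝ) ^ N := by
      filter_upwards [hev, eventually_ge_atTop 1] with N hN hN1
      have hNne : (N : ℝ) ≠ 0 := Nat.cast_ne_zero.mpr (by omega)
      have h1 : ((‖R ^ N‖₊ : ENNReal) ^ (1 / (N : ℝ))) ^ (N : ℝ)
          < (r : ENNReal) ^ (N : ℝ) :=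
        ENNReal.rpow_lt_rpow hN (by positivity)
      rw [← ENNReal.rpow_mul, one_div, inv_mul_cancel₀ hNne, ENNReal.rpow_one,
        ENNReal.rpow_natCast, ← ENNReal.coe_pow, ENNReal.coe_lt_coe] at h1
      have := (NNReal.coe_lt_coe.mpr h1).le
      simpa [coe_nnnorm] using this
    have hgeo : Tendsto (fun N : ℕ => (r : ℝ) ^ N) atTop (nhds 0) :=
      tendsto_pow_atTop_nhds_zero_of_lt_one r.coe_nonneg hr2'
    exact squeeze_zero' (Eventually.of_forall fun N => norm_nonneg _) hev2 hgeo

lemma aux_entry_tendsto_zero {n : ℕ} (R : Matrix (Fin n) (Fin n) ℂ)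
    (hspec : ∀ μ ∈ spectrum ℂ R, ‖μ‖ < 1) (i j : Fin n) :
    Tendsto (fun N : ℕ => (R ^ N) i j) atTop (nhds 0) := by
  rw [tendsto_zero_iff_norm_tendsto_zero]
  refine squeeze_zero (fun N => norm_nonneg _) (fun N => ?_)
    (aux_norm_pow_tendsto_zero R hspec)
  -- entry bound for linfty operator norm
  have h1 : ‖(R ^ N) i j‖₊ ≤ ∑ k, ‖(R ^ N) i k‖₊ :=
    Finset.single_le_sum (f := fun k => ‖(R ^ N) i k‖₊) (fun _ _ => zero_le)
      (Finset.mem_univ j)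
  have h2 : (∑ k, ‖(R ^ N) i k‖₊) ≤ ‖R ^ N‖₊ := by
    rw [Matrix.linfty_opNNNorm_def]
    exact Finset.le_sup (f := fun i => ∑ k, ‖(R ^ N) i k‖₊) (Finset.mem_univ i)
  exact_mod_cast h1.trans h2

end norm_aux

/-- if `E = v wᴴ + R` with `wᴴ v = 1`, `R v = 0`, `wᴴ R = 0`, and the spectral
radius of `R` strictly less than 1, then for every matrix `X` the sequence
`N ↦ Tr(E^N X)` converges to `wᴴ X v`. -/
theorem trace_pow_mul_tendsto {n : ℕ} (E R : Matrix (Fin n) (Fin n) ℂ) (v w : Fin n → ℂ)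
    (hE : E = Matrix.vecMulVec v (fun β => (starRingEnd ℂ) (w β)) + R)
    (hwv : ∑ i, (starRingEnd ℂ) (w i) * v i = 1)
    (hRv : R.mulVec v = 0)
    (hwR : Matrix.vecMul (fun β => (starRingEnd ℂ) (w β)) R = 0)
    (hspec : ∀ μ ∈ spectrum ℂ R, ‖μ‖ < 1) :
    ∀ X : Matrix (Fin n) (Fin n) ℂ,
      Filter.Tendsto (fun N : ℕ => ((E ^ N) * X).trace) Filter.atTop
        (nhds (∑ i, ∑ j, (starRingEnd ℂ) (w i) * X i j * v j)) := by
  intro X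
  set w' : Fin n → ℂ := fun β => (starRingEnd ℂ) (w β) with hw'
  set P : Matrix (Fin n) (Fin n) ℂ := Matrix.vecMulVec v w' with hP
  have hPP : P * P = P := by
    ext i j
    simp only [hP, Matrix.mul_apply, Matrix.vecMulVec_apply]
    calc ∑ k, v i * w' k * (v k * w' j) = (∑ k, w' k * v k) * (v i * w' j) := by
          rw [Finset.sum_mul]; exact Finset.sum_congr rfl fun k _ => by ring
      _ = v i * w' j := by rw [hwv, one_mul]
  have hPR : P * R = 0 := by
    ext i j
    have := congrFun hwR j
    simp only [Matrix.vecMul, dotProduct, Pi.zero_apply] at this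
    simp only [hP, Matrix.mul_apply, Matrix.vecMulVec_apply, Matrix.zero_apply]
    calc ∑ k, v i * w' k * R k j = v i * ∑ k, w' k * R k j := by
          rw [Finset.mul_sum]; exact Finset.sum_congr rfl fun k _ => by ring
      _ = 0 := by rw [this, mul_zero]
  have hRP : R * P = 0 := by
    ext i j
    have := congrFun hRv i
    simp only [Matrix.mulVec, dotProduct, Pi.zero_apply] at this
    simp only [hP, Matrix.mul_apply, Matrix.vecMulVec_apply, Matrix.zero_apply]
    calc ∑ k, R i k * (v k * w' j) = (∑ k, R i k * v k) * w' j := by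
          rw [Finset.sum_mul]; exact Finset.sum_congr rfl fun k _ => by ring
      _ = 0 := by rw [this, zero_mul]
  have hpow : ∀ N : ℕ, E ^ (N + 1) = P + R ^ (N + 1) := by
    intro N
    induction N with
    | zero => simpa [hE]
    | succ N ih =>
      have : E ^ (N + 2) = E ^ (N + 1) * E := by rw [← pow_succ]
      rw [this, ih, hE]
      have hRPpow : R ^ (N + 1) * P = 0 := by
        rw [pow_succ, mul_assoc, hRP, Matrix.mul_zero]
      rw [add_mul, mul_add, mul_add, hPP, hPR, hRPpow, ← pow_succ]
      abel
  have htarget : (P * X).trace = ∑ i, ∑ j, w' i * X i j * v j := by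
    rw [Matrix.trace]
    simp only [Matrix.diag_apply, Matrix.mul_apply, hP, Matrix.vecMulVec_apply]
    rw [Finset.sum_comm]
    exact Finset.sum_congr rfl fun i _ => Finset.sum_congr rfl fun j _ => by ring
  have htr0 : Filter.Tendsto (fun N : ℕ => ((R ^ N) * X).trace) Filter.atTop (nhds 0) := by
    have : ∀ N : ℕ, ((R ^ N) * X).trace = ∑ i, ∑ k, (R ^ N) i k * X k i := by
      intro N
      rw [Matrix.trace]
      exact Finset.sum_congr rfl fun i _ => by rw [Matrix.diag_apply, Matrix.mul_apply]
    simp only [this]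
    have h0 : (0 : ℂ) = ∑ i : Fin n, ∑ k : Fin n, (0 : ℂ) := by simp
    rw [h0]
    refine tendsto_finset_sum _ fun i _ => tendsto_finset_sum _ fun k _ => ?_
    simpa using (aux_entry_tendsto_zero R hspec i k).mul_const (X k i)
  have hmain : Filter.Tendsto (fun N : ℕ => (P * X).trace + ((R ^ N) * X).trace)
      Filter.atTop (nhds ((P * X).trace + 0)) := tendsto_const_nhds.add htr0
  rw [add_zero, htarget] at hmain
  refine hmain.congr' ?_
  filter_upwards [Filter.eventually_ge_atTop 1] with N hN
  obtain ⟨M, rfl⟩ : ∃ M, N = M + 1 := ⟨N - 1, by omega⟩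
  rw [hpow M, Matrix.add_mul, Matrix.trace_add, htarget]
end

section
/- Let U be a depth-T nearest-neighbor quantum circuit on N sites of local dimension d, let u₁, …, u_N ∈ ℂ^d be unit vectors, and set ψ = U(u₁ ⊗ ⋯ ⊗ u_N). Let O, O' be d×d complex matrices and let a, b ∈ {1, …, N} be sites with b − a > 2T. Then the two-point function of ψ factorizes: ⟨ψ, O_a O'_b ψ⟩ = ⟨ψ, O_a ψ⟩ · ⟨ψ, O'_b ψ⟩, where O_a denotes the operator acting as O on site a and as the identity on all other sites. -/
open Matrix

/-- An operator on `N` sites of local dimension `d` is supported on the set `S` of sites if it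
acts as some gate `g` on the sites in `S` and as the identity on all other sites. -/
def SupportedOn {N d : ℕ} (M : Matrix (Fin N → Fin d) (Fin N → Fin d) ℂ)
    (S : Finset (Fin N)) : Prop :=
  ∃ g : Matrix ({ k // k ∈ S } → Fin d) ({ k // k ∈ S } → Fin d) ℂ,
    ∀ x y : Fin N → Fin d,
      M x y = if ∀ k ∉ S, x k = y k then g (fun k => x k.1) (fun k => y k.1) else 0

/-- A set of sites consisting of a single site or of two adjacent sites. -/
def IsNearestNeighborSupport {N : ℕ} (S : Finset (Fin N)) : Prop :=
  S.card ≤ 2 ∧ ∀ a ∈ S, ∀ b ∈ S, (a : ℕ) ≤ (b : ℕ) → (b : ℕ) ≤ (a : ℕ) + 1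

/-- A layer of a nearest-neighbor circuit: a product of unitary gates acting on pairwise
disjoint sets of sites, each set being a single site or a pair of adjacent sites. -/
def IsLayer {N d : ℕ} (U : Matrix (Fin N → Fin d) (Fin N → Fin d) ℂ) : Prop :=
  ∃ (m : ℕ) (G : Fin m → Matrix (Fin N → Fin d) (Fin N → Fin d) ℂ)
    (S : Fin m → Finset (Fin N)),
      (∀ i, SupportedOn (G i) (S i)) ∧
      (∀ i, (G i)ᴴ * G i = 1 ∧ G i * (G i)ᴴ = 1) ∧
      (∀ i j, i ≠ j → Disjoint (S i) (S j)) ∧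
      (∀ i, IsNearestNeighborSupport (S i)) ∧
      U = (List.ofFn G).prod

/-- A depth-`T` nearest-neighbor quantum circuit on `N` sites of local dimension `d`:
a product of `T` layers. -/
def IsCircuit {N d : ℕ} (T : ℕ) (U : Matrix (Fin N → Fin d) (Fin N → Fin d) ℂ) : Prop :=
  ∃ L : Fin T → Matrix (Fin N → Fin d) (Fin N → Fin d) ℂ,
    (∀ t, IsLayer (L t)) ∧ U = (List.ofFn L).prod

/-- The single-site operator acting as the `d×d` matrix `O` on site `a` and as the identity
on all other sites. -/
def siteOp {N d : ℕ} (O : Matrix (Fin d) (Fin d) ℂ) (a : Fin N) :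
    Matrix (Fin N → Fin d) (Fin N → Fin d) ℂ :=
  fun x y => if ∀ k, k ≠ a → x k = y k then O (x a) (y a) else 0

/-- The expectation value `⟨ψ, M ψ⟩` of an operator `M` in the (not necessarily normalized)
state `ψ`. -/
noncomputable def expval {ι : Type*} [Fintype ι] (M : Matrix ι ι ℂ) (ψ : ι → ℂ) : ℂ :=
  ∑ x, (starRingEnd ℂ) (ψ x) * M.mulVec ψ x

namespace LC

variable {d : ℕ}

/-- extension of a pair of functions on a predicate split -/
def ext {ι : Type*} (P : ι → Prop) [DecidablePred P]
    (p : {k // P k} → Fin d) (c : {k // ¬ P k} → Fin d) : ι → Fin d :=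
  fun k => if h : P k then p ⟨k, h⟩ else c ⟨k, h⟩

lemma ext_pos {ι : Type*} (P : ι → Prop) [DecidablePred P]
    (p : {k // P k} → Fin d) (c : {k // ¬ P k} → Fin d) {k : ι} (h : P k) :
    ext P p c k = p ⟨k, h⟩ := dif_pos h

lemma ext_neg {ι : Type*} (P : ι → Prop) [DecidablePred P]
    (p : {k // P k} → Fin d) (c : {k // ¬ P k} → Fin d) {k : ι} (h : ¬ P k) :
    ext P p c k = c ⟨k, h⟩ := dif_neg h

lemma restr_ext {ι : Type*} (P : ι → Prop) [DecidablePred P]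
    (p : {k // P k} → Fin d) (c : {k // ¬ P k} → Fin d) :
    (fun k : {k // P k} => ext P p c k.1) = p :=
  funext fun k => by rw [ext_pos P p c k.2, Subtype.coe_eta]

lemma sum_ext {ι : Type*} [Fintype ι] [DecidableEq ι] (P : ι → Prop) [DecidablePred P]
    (f : (ι → Fin d) → ℂ) :
    ∑ x : ι → Fin d, f x = ∑ p : {k // P k} → Fin d, ∑ c : {k // ¬ P k} → Fin d,
      f (ext P p c) := by
  rw [← Equiv.sum_comp (Equiv.piEquivPiSubtypeProd P fun _ => Fin d).symm f,
    Fintype.sum_prod_type]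
  rfl

lemma prod_ext {ι : Type*} [Fintype ι] (P : ι → Prop) [DecidablePred P]
    (F : ι → Fin d → ℂ) (p : {k // P k} → Fin d) (c : {k // ¬ P k} → Fin d) :
    ∏ k, F k (ext P p c k)
      = (∏ k : {k // P k}, F k.1 (p k)) * ∏ k : {k // ¬ P k}, F k.1 (c k) := by
  rw [← Fintype.prod_subtype_mul_prod_subtype P (fun k => F k (ext P p c k))]
  congr 1
  · exact Fintype.prod_congr _ _ fun k => by rw [ext_pos P p c k.2, Subtype.coe_eta]
  · exact Fintype.prod_congr _ _ fun k => by rw [ext_neg P p c k.2, Subtype.coe_eta]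

lemma cond_ext {ι : Type*} (P : ι → Prop) [DecidablePred P]
    (p q : {k // P k} → Fin d) (c c' : {k // ¬ P k} → Fin d) :
    (∀ k, ¬ P k → ext P p c k = ext P q c' k) ↔ c = c' := by
  constructor
  · intro h
    funext k
    have := h k.1 k.2
    rwa [ext_neg P p c k.2, ext_neg P q c' k.2] at this
  · rintro rfl k hk
    rw [ext_neg P p c hk, ext_neg P q c hk]

lemma sum_pi_prod {κ : Type*} [Fintype κ] [DecidableEq κ] (F : κ → Fin d → ℂ) :
    ∑ c : κ → Fin d, ∏ k, F k (c k) = ∏ k, ∑ i, F k i :=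
  (Fintype.prod_sum F).symm


lemma sum_supported {ι : Type*} [Fintype ι] [DecidableEq ι]
    (P : ι → Prop) [DecidablePred P]
    (v w : ι → Fin d → ℂ) (hw : ∀ k, ¬ P k → ∑ i, v k i * w k i = 1)
    (g : ({k // P k} → Fin d) → ({k // P k} → Fin d) → ℂ) :
    ∑ x : ι → Fin d, ∑ y : ι → Fin d,
        (∏ k, v k (x k)) *
          (if ∀ k, ¬ P k → x k = y k then g (fun k => x k.1) (fun k => y k.1) else 0) *
          (∏ k, w k (y k))
      = ∑ p, ∑ q,
          (∏ k : {k // P k}, v k.1 (p k)) * g p q * (∏ k : {k // P k}, w k.1 (q k)) := by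
  simp only [sum_ext P]
  simp only [prod_ext, restr_ext, cond_ext]
  simp only [mul_ite, mul_zero, ite_mul, zero_mul]
  simp only [Finset.sum_ite_eq, Finset.mem_univ, if_true]
  refine Finset.sum_congr rfl fun p _ => ?_
  rw [Finset.sum_comm]
  refine Finset.sum_congr rfl fun q _ => ?_
  have : ∀ c : {k // ¬ P k} → Fin d,
      (∏ k : {k // P k}, v k.1 (p k)) * (∏ k : {k // ¬ P k}, v k.1 (c k)) * g p q *
        ((∏ k : {k // P k}, w k.1 (q k)) * ∏ k : {k // ¬ P k}, w k.1 (c k))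
      = ((∏ k : {k // P k}, v k.1 (p k)) * g p q * ∏ k : {k // P k}, w k.1 (q k)) *
          ∏ k : {k // ¬ P k}, (v k.1 (c k) * w k.1 (c k)) := by
    intro c
    rw [Finset.prod_mul_distrib]
    ring
  calc ∑ c : {k // ¬ P k} → Fin d,
        (∏ k : {k // P k}, v k.1 (p k)) * (∏ k : {k // ¬ P k}, v k.1 (c k)) * g p q *
          ((∏ k : {k // P k}, w k.1 (q k)) * ∏ k : {k // ¬ P k}, w k.1 (c k))
      = ∑ c : {k // ¬ P k} → Fin d,
          ((∏ k : {k // P k}, v k.1 (p k)) * g p q * ∏ k : {k // P k}, w k.1 (q k)) *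
            ∏ k : {k // ¬ P k}, (v k.1 (c k) * w k.1 (c k)) :=
        Finset.sum_congr rfl fun c _ => this c
    _ = ((∏ k : {k // P k}, v k.1 (p k)) * g p q * ∏ k : {k // P k}, w k.1 (q k)) *
          ∑ c : {k // ¬ P k} → Fin d, ∏ k : {k // ¬ P k}, (v k.1 (c k) * w k.1 (c k)) := by
        rw [Finset.mul_sum]
    _ = _ := by
        rw [sum_pi_prod (fun (k : {k // ¬ P k}) (i : Fin d) => v k.1 i * w k.1 i),
          show (∏ k : {k // ¬ P k}, ∑ i, v k.1 i * w k.1 i) = 1 from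
            Finset.prod_eq_one fun k _ => hw k.1 k.2, mul_one]


lemma bracket_eq {ι : Type*} [Fintype ι] [DecidableEq ι]
    (PA PB : ι → Prop) [DecidablePred PA] [DecidablePred PB]
    (hAB : ∀ k, PB k → ¬ PA k)
    (v w : ι → Fin d → ℂ) (hw : ∀ k, ∑ i, v k i * w k i = 1)
    (gB : ({k // PB k} → Fin d) → ({k // PB k} → Fin d) → ℂ) :
    ∑ c : {k // ¬ PA k} → Fin d, ∑ c' : {k // ¬ PA k} → Fin d,
        (∏ kk, v kk.1 (c kk)) *
          (if ∀ kk : {k // ¬ PA k}, ¬ PB kk.1 → c kk = c' kk then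
              gB (fun k : {k // PB k} => c ⟨k.1, hAB k.1 k.2⟩)
                (fun k : {k // PB k} => c' ⟨k.1, hAB k.1 k.2⟩)
            else 0) *
          (∏ kk, w kk.1 (c' kk))
      = ∑ p : {k // PB k} → Fin d, ∑ q : {k // PB k} → Fin d,
          (∏ k, v k.1 (p k)) * gB p q * (∏ k, w k.1 (q k)) := by
  classical
  set ι' := {k // ¬ PA k}
  let Ee : {k // PB k} ≃ {kk : ι' // PB kk.1} :=
    { toFun := fun k => ⟨⟨k.1, hAB k.1 k.2⟩, k.2⟩
      invFun := fun kk => ⟨kk.1.1, kk.2⟩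
      left_inv := fun k => rfl
      right_inv := fun kk => Subtype.ext (Subtype.ext rfl) }
  have step := sum_supported (ι := ι') (fun kk => PB kk.1)
    (fun kk i => v kk.1 i) (fun kk i => w kk.1 i) (fun kk _ => hw kk.1)
    (fun p q => gB (fun k => p (Ee k)) (fun k => q (Ee k)))
  refine Eq.trans ?_ (step.trans ?_)
  · rfl
  · rw [← Equiv.sum_comp (Equiv.arrowCongr Ee (Equiv.refl (Fin d)))
      (fun p : {kk : ι' // PB kk.1} → Fin d => _)]
    refine Finset.sum_congr rfl fun p _ => ?_
    rw [← Equiv.sum_comp (Equiv.arrowCongr Ee (Equiv.refl (Fin d)))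
      (fun q : {kk : ι' // PB kk.1} → Fin d => _)]
    refine Finset.sum_congr rfl fun q _ => ?_
    congr 1
    · congr 1
      · rw [← Equiv.prod_comp Ee
          (fun kk => v kk.1.1 ((Equiv.arrowCongr Ee (Equiv.refl (Fin d))) p kk))]
        exact Fintype.prod_congr _ _ fun k => by simp [Equiv.arrowCongr, Ee]
    · rw [← Equiv.prod_comp Ee
        (fun kk => w kk.1.1 ((Equiv.arrowCongr Ee (Equiv.refl (Fin d))) q kk))]
      exact Fintype.prod_congr _ _ fun k => by simp [Equiv.arrowCongr, Ee]

lemma coreSplit {ι : Type*} [Fintype ι] [DecidableEq ι]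
    (SA SB : Finset ι) (hdisj : Disjoint SA SB)
    (v w : ι → Fin d → ℂ) (hw : ∀ k, ∑ i, v k i * w k i = 1)
    (gA : ({k // k ∈ SA} → Fin d) → ({k // k ∈ SA} → Fin d) → ℂ)
    (gB : ({k // k ∈ SB} → Fin d) → ({k // k ∈ SB} → Fin d) → ℂ) :
    ∑ x : ι → Fin d, ∑ y : ι → Fin d,
        (∏ k, v k (x k)) *
          (if ∀ k, k ∉ SA ∪ SB → x k = y k then
              gA (fun k => x k.1) (fun k => y k.1) * gB (fun k => x k.1) (fun k => y k.1)
            else 0) *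
          (∏ k, w k (y k))
      = (∑ x : ι → Fin d, ∑ y : ι → Fin d,
          (∏ k, v k (x k)) *
            (if ∀ k, ¬ k ∈ SA → x k = y k then gA (fun k => x k.1) (fun k => y k.1) else 0) *
            (∏ k, w k (y k)))
        * (∑ x : ι → Fin d, ∑ y : ι → Fin d,
          (∏ k, v k (x k)) *
            (if ∀ k, ¬ k ∈ SB → x k = y k then gB (fun k => x k.1) (fun k => y k.1) else 0) *
            (∏ k, w k (y k))) := by
  have hAB : ∀ k, k ∈ SB → ¬ k ∈ SA := fun k hk hk' => Finset.disjoint_left.mp hdisj hk' hk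
  rw [sum_supported (fun k => k ∈ SA) v w (fun k _ => hw k) gA,
      sum_supported (fun k => k ∈ SB) v w (fun k _ => hw k) gB,
      ← bracket_eq (fun k => k ∈ SA) (fun k => k ∈ SB) hAB v w hw gB]
  have cond : ∀ (p q : {k // k ∈ SA} → Fin d) (c c' : {k // ¬ k ∈ SA} → Fin d),
      (∀ k, k ∉ SA ∪ SB →
          ext (fun k => k ∈ SA) p c k = ext (fun k => k ∈ SA) q c' k)
        ↔ ∀ kk : {k // ¬ k ∈ SA}, ¬ kk.1 ∈ SB → c kk = c' kk := by
    intro p q c c'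
    constructor
    · intro h kk hkk
      have h1 : kk.1 ∉ SA ∪ SB := by
        simp only [Finset.mem_union, not_or]; exact ⟨kk.2, hkk⟩
      have := h kk.1 h1
      rwa [ext_neg _ p c kk.2, ext_neg _ q c' kk.2] at this
    · intro h k hk
      have hkA : ¬ k ∈ SA := fun hx => hk (Finset.mem_union_left _ hx)
      have hkB : ¬ k ∈ SB := fun hx => hk (Finset.mem_union_right _ hx)
      rw [ext_neg _ p c hkA, ext_neg _ q c' hkA]
      exact h ⟨k, hkA⟩ hkB
  have liftg : ∀ (p : {k // k ∈ SA} → Fin d) (c : {k // ¬ k ∈ SA} → Fin d),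
      (fun kk : {k // k ∈ SB} => ext (fun k => k ∈ SA) p c kk.1)
        = (fun kk : {k // k ∈ SB} => c ⟨kk.1, hAB kk.1 kk.2⟩) := by
    intro p c
    funext kk
    exact ext_neg _ p c (hAB kk.1 kk.2)
  simp only [sum_ext (fun k => k ∈ SA)]
  simp only [prod_ext, restr_ext, cond, liftg]
  rw [Finset.sum_mul_sum]
  refine Finset.sum_congr rfl fun p _ => ?_
  refine Finset.sum_congr rfl fun c _ => ?_
  rw [Finset.sum_mul_sum]
  refine Finset.sum_congr rfl fun q _ => ?_
  refine Finset.sum_congr rfl fun c' _ => ?_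
  split_ifs with h <;> ring


section Support

variable {N : ℕ} {M M' : Matrix (Fin N → Fin d) (Fin N → Fin d) ℂ} {S S' : Finset (Fin N)}

lemma supportedOn_mono (h : SupportedOn M S) (hss : S ⊆ S') : SupportedOn M S' := by
  obtain ⟨g, hg⟩ := h
  classical
  refine ⟨fun p q => if ∀ k : {k // k ∈ S'}, k.1 ∉ S → p k = q k then
      g (fun k => p ⟨k.1, hss k.2⟩) (fun k => q ⟨k.1, hss k.2⟩) else 0, fun x y => ?_⟩
  dsimp only
  rw [hg]
  by_cases h1 : ∀ k ∉ S', x k = y k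
  · rw [if_pos h1]
    by_cases h2 : ∀ k ∉ S, x k = y k
    · rw [if_pos h2, if_pos (show ∀ k : {k // k ∈ S'}, k.1 ∉ S → x k.1 = y k.1 from
        fun k hk => h2 k.1 hk)]
    · rw [if_neg h2, if_neg]
      intro hc
      refine h2 fun k hk => ?_
      by_cases hk' : k ∈ S'
      · exact hc ⟨k, hk'⟩ hk
      · exact h1 k hk'
  · rw [if_neg h1, if_neg]
    intro hc
    exact h1 fun k hk => hc k fun hkS => hk (hss hkS)

lemma supportedOn_conjTranspose (h : SupportedOn M S) : SupportedOn Mᴴ S := by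
  obtain ⟨g, hg⟩ := h
  refine ⟨gᴴ, fun x y => ?_⟩
  rw [conjTranspose_apply, hg]
  by_cases h1 : ∀ k ∉ S, x k = y k
  · rw [if_pos fun k hk => (h1 k hk).symm, if_pos h1, conjTranspose_apply]
  · rw [if_neg fun hc => h1 fun k hk => (hc k hk).symm, if_neg h1, star_zero]

lemma supportedOn_mul (h : SupportedOn M S) (h' : SupportedOn M' S) :
    SupportedOn (M * M') S := by
  classical
  obtain ⟨g, hg⟩ := h
  obtain ⟨g', hg'⟩ := h'
  refine ⟨g * g', fun x y => ?_⟩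
  rw [Matrix.mul_apply]
  simp only [hg, hg']
  by_cases h1 : ∀ k ∉ S, x k = y k
  · rw [if_pos h1, Matrix.mul_apply]
    rw [sum_ext (d := d) (fun k : Fin N => k ∈ S)
      (fun z => (if ∀ k ∉ S, x k = z k then g (fun k => x k.1) (fun k => z k.1) else 0) *
        (if ∀ k ∉ S, z k = y k then g' (fun k => z k.1) (fun k => y k.1) else 0))]
    have hxc : ∀ (p : {k // k ∈ S} → Fin d) (c : {k // ¬ k ∈ S} → Fin d),
        (∀ k ∉ S, x k = ext (fun k : Fin N => k ∈ S) p c k)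
          ↔ (fun kk : {k // ¬ k ∈ S} => x kk.1) = c := by
      intro p c
      constructor
      · intro hh
        funext kk
        have := hh kk.1 kk.2
        rwa [ext_neg _ p c kk.2] at this
      · rintro rfl k hk
        rw [ext_neg _ p _ hk]
    simp only [hxc, restr_ext]
    simp only [ite_mul, zero_mul, Finset.sum_ite_eq, Finset.mem_univ, if_true]
    refine Finset.sum_congr (by congr!) fun p _ => ?_
    congr 1
    rw [if_pos]
    intro k hk
    rw [ext_neg _ p _ hk]
    exact h1 k hk
  · rw [if_neg h1]
    refine Finset.sum_eq_zero fun z _ => ?_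
    by_cases h2 : ∀ k ∉ S, x k = z k
    · rw [if_pos h2,
        if_neg (fun h3 : ∀ k ∉ S, z k = y k => h1 fun k hk => (h2 k hk).trans (h3 k hk)),
        mul_zero]
    · rw [if_neg h2, zero_mul]

end Support


section Disjoint

variable {N : ℕ} {M M' : Matrix (Fin N → Fin d) (Fin N → Fin d) ℂ} {S S' : Finset (Fin N)}

lemma mul_apply_disjoint
    (g : Matrix ({ k // k ∈ S } → Fin d) ({ k // k ∈ S } → Fin d) ℂ)
    (g' : Matrix ({ k // k ∈ S' } → Fin d) ({ k // k ∈ S' } → Fin d) ℂ)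
    (hg : ∀ x y, M x y = if ∀ k ∉ S, x k = y k then g (fun k => x k.1) (fun k => y k.1) else 0)
    (hg' : ∀ x y, M' x y =
      if ∀ k ∉ S', x k = y k then g' (fun k => x k.1) (fun k => y k.1) else 0)
    (hdisj : Disjoint S S') (x y : Fin N → Fin d) :
    (M * M') x y = if ∀ k, k ∉ S ∪ S' → x k = y k then
        g (fun k => x k.1) (fun k => y k.1) * g' (fun k => x k.1) (fun k => y k.1)
      else 0 := by
  classical
  rw [Matrix.mul_apply]
  set wz : Fin N → Fin d := fun k => if k ∈ S then y k else x k with hwz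
  rw [Finset.sum_eq_single wz]
  · have e1 : M x wz = g (fun k => x k.1) (fun k => y k.1) := by
      rw [hg, if_pos fun k hk => by simp [wz, hk]]
      congr 1
      funext k
      simp [wz, k.2]
    have e2 : M' wz y = if ∀ k, k ∉ S ∪ S' → x k = y k then
        g' (fun k => x k.1) (fun k => y k.1) else 0 := by
      rw [hg']
      have harg : (fun k : {k // k ∈ S'} => wz k.1) = fun k : {k // k ∈ S'} => x k.1 := by
        funext k
        have : k.1 ∉ S := Finset.disjoint_right.mp hdisj k.2
        simp [wz, this]
      rw [harg]
      refine if_congr ?_ rfl rfl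
      constructor
      · intro h k hk
        have hkS : k ∉ S := fun hx => hk (Finset.mem_union_left _ hx)
        have hkS' : k ∉ S' := fun hx => hk (Finset.mem_union_right _ hx)
        have := h k hkS'
        simpa [wz, hkS] using this
      · intro h k hk
        by_cases hkS : k ∈ S
        · simp [wz, hkS]
        · simpa [wz, hkS] using h k (by simp [Finset.mem_union, hkS, hk])
    rw [e1, e2, mul_ite, mul_zero]
  · intro z _ hz
    rw [hg, hg']
    by_cases h2 : ∀ k ∉ S, x k = z k
    · by_cases h3 : ∀ k ∉ S', z k = y k
      · exfalso
        apply hz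
        funext k
        by_cases hkS : k ∈ S
        · have : k ∉ S' := Finset.disjoint_left.mp hdisj hkS
          rw [h3 k this]
          simp [wz, hkS]
        · rw [← h2 k hkS]
          simp [wz, hkS]
      · rw [if_neg h3, mul_zero]
    · rw [if_neg h2, zero_mul]
  · intro hx
    exact absurd (Finset.mem_univ wz) hx

lemma supportedOn_mul_disjoint (h : SupportedOn M S) (h' : SupportedOn M' S')
    (hdisj : Disjoint S S') :
    ∀ x y, (M * M') x y = if ∀ k, k ∉ S ∪ S' → x k = y k then
        (Classical.choose h) (fun k => x k.1) (fun k => y k.1) *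
          (Classical.choose h') (fun k => x k.1) (fun k => y k.1)
      else 0 :=
  mul_apply_disjoint _ _ (Classical.choose_spec h) (Classical.choose_spec h') hdisj

lemma mul_comm_disjoint (h : SupportedOn M S) (h' : SupportedOn M' S')
    (hdisj : Disjoint S S') : M * M' = M' * M := by
  obtain ⟨g, hg⟩ := h
  obtain ⟨g', hg'⟩ := h'
  ext x y
  rw [mul_apply_disjoint g g' hg hg' hdisj, mul_apply_disjoint g' g hg' hg hdisj.symm]
  refine if_congr ?_ (mul_comm _ _) rfl
  rw [Finset.union_comm]

end Disjoint


section LightCone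

variable {N : ℕ}

def ball (a : Fin N) (t : ℕ) : Finset (Fin N) :=
  Finset.univ.filter fun k => (a : ℕ) ≤ (k : ℕ) + t ∧ (k : ℕ) ≤ (a : ℕ) + t

lemma mem_ball {a k : Fin N} {t : ℕ} :
    k ∈ ball a t ↔ (a : ℕ) ≤ (k : ℕ) + t ∧ (k : ℕ) ≤ (a : ℕ) + t := by
  simp [ball]

lemma ball_mono {a : Fin N} {t t' : ℕ} (h : t ≤ t') : ball a t ⊆ ball a t' := by
  intro k hk
  rw [mem_ball] at *
  omega

lemma nn_subset_ball {a : Fin N} {t : ℕ} {Si : Finset (Fin N)}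
    (hnn : IsNearestNeighborSupport Si) (h : ¬ Disjoint Si (ball a t)) :
    Si ⊆ ball a (t + 1) := by
  rw [Finset.not_disjoint_iff] at h
  obtain ⟨j, hjS, hjB⟩ := h
  intro m hm
  rw [mem_ball] at hjB ⊢
  rcases le_total (j : ℕ) (m : ℕ) with hc | hc
  · have := hnn.2 j hjS m hm hc
    omega
  · have := hnn.2 m hm j hjS hc
    omega

lemma conj_list (B B' : Finset (Fin N)) :
    ∀ l : List (Matrix (Fin N → Fin d) (Fin N → Fin d) ℂ × Finset (Fin N)),
      (∀ p ∈ l, SupportedOn p.1 p.2) → (∀ p ∈ l, p.1ᴴ * p.1 = 1) →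
      List.Pairwise (fun p q => Disjoint p.2 q.2) l →
      (∀ p ∈ l, ¬ Disjoint p.2 B → p.2 ⊆ B') →
      ∀ (M : Matrix (Fin N → Fin d) (Fin N → Fin d) ℂ) (Q : Finset (Fin N)),
        SupportedOn M Q → Q ⊆ B' →
        (∀ p ∈ l, Disjoint p.2 B → Disjoint p.2 Q) →
        SupportedOn (((l.map Prod.fst).prod)ᴴ * M * (l.map Prod.fst).prod) B' := by
  intro l
  induction l with
  | nil =>
    intro _ _ _ _ M Q hM hQ _
    simpa using supportedOn_mono hM hQ
  | cons gp t ih =>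
    intro h1 h2 hd hB M Q hM hQB hQ
    simp only [List.map_cons, List.prod_cons, conjTranspose_mul]
    obtain ⟨hdhead, hdtail⟩ := List.pairwise_cons.mp hd
    have hgs : SupportedOn gp.1 gp.2 := h1 gp (List.mem_cons_self)
    have hgu : gp.1ᴴ * gp.1 = 1 := h2 gp (List.mem_cons_self)
    have key : ((List.map Prod.fst t).prod)ᴴ * gp.1ᴴ * M * (gp.1 * (List.map Prod.fst t).prod)
        = ((List.map Prod.fst t).prod)ᴴ * (gp.1ᴴ * M * gp.1) * (List.map Prod.fst t).prod := by
      simp only [Matrix.mul_assoc]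
    rw [key]
    by_cases hcap : Disjoint gp.2 B
    · have hdq : Disjoint gp.2 Q := hQ gp (List.mem_cons_self) hcap
      have hcomm : gp.1 * M = M * gp.1 := mul_comm_disjoint hgs hM hdq
      have : gp.1ᴴ * M * gp.1 = M := by
        rw [Matrix.mul_assoc, ← hcomm, ← Matrix.mul_assoc, hgu, Matrix.one_mul]
      rw [this]
      exact ih (fun p hp => h1 p (List.mem_cons_of_mem _ hp))
        (fun p hp => h2 p (List.mem_cons_of_mem _ hp)) hdtail
        (fun p hp => hB p (List.mem_cons_of_mem _ hp)) M Q hM hQB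
        (fun p hp => hQ p (List.mem_cons_of_mem _ hp))
    · have hsub : gp.2 ⊆ B' := hB gp (List.mem_cons_self) hcap
      have hM' : SupportedOn (gp.1ᴴ * M * gp.1) (Q ∪ gp.2) :=
        supportedOn_mul
          (supportedOn_mul
            (supportedOn_conjTranspose (supportedOn_mono hgs Finset.subset_union_right))
            (supportedOn_mono hM Finset.subset_union_left))
          (supportedOn_mono hgs Finset.subset_union_right)
      refine ih (fun p hp => h1 p (List.mem_cons_of_mem _ hp))
        (fun p hp => h2 p (List.mem_cons_of_mem _ hp)) hdtail
        (fun p hp => hB p (List.mem_cons_of_mem _ hp)) _ (Q ∪ gp.2) hM'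
        (Finset.union_subset hQB hsub) ?_
      intro p hp hpB
      exact Finset.disjoint_union_right.mpr
        ⟨hQ p (List.mem_cons_of_mem _ hp) hpB, (hdhead p hp).symm⟩

lemma conj_layer {a : Fin N} {t : ℕ} {L M : Matrix (Fin N → Fin d) (Fin N → Fin d) ℂ}
    (hL : IsLayer L) (hM : SupportedOn M (ball a t)) :
    SupportedOn (Lᴴ * M * L) (ball a (t + 1)) := by
  obtain ⟨m, G, S, hsup, huni, hdisj, hnn, rfl⟩ := hL
  have hmap : (List.ofFn fun i => (G i, S i)).map Prod.fst = List.ofFn G := by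
    rw [List.map_ofFn]
    rfl
  have := conj_list (d := d) (ball a t) (ball a (t + 1))
    (List.ofFn fun i => (G i, S i))
    (by
      intro p hp
      obtain ⟨i, rfl⟩ := List.mem_ofFn.mp hp
      exact hsup i)
    (by
      intro p hp
      obtain ⟨i, rfl⟩ := List.mem_ofFn.mp hp
      exact (huni i).1)
    (by
      rw [List.pairwise_ofFn]
      intro i j hij
      exact hdisj i j hij.ne)
    (by
      intro p hp hpB
      obtain ⟨i, rfl⟩ := List.mem_ofFn.mp hp
      exact nn_subset_ball (hnn i) hpB)
    M (ball a t) hM (ball_mono (Nat.le_succ t))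
    (fun p _ h => h)
  rwa [hmap] at this

lemma conj_circuit_list {a : Fin N} :
    ∀ l : List (Matrix (Fin N → Fin d) (Fin N → Fin d) ℂ),
      (∀ L ∈ l, IsLayer L) →
      ∀ (t : ℕ) (M : Matrix (Fin N → Fin d) (Fin N → Fin d) ℂ),
        SupportedOn M (ball a t) →
        SupportedOn ((l.prod)ᴴ * M * l.prod) (ball a (t + l.length)) := by
  intro l
  induction l with
  | nil =>
    intro _ t M hM
    simpa using hM
  | cons L rest ih =>
    intro hl t M hM
    simp only [List.prod_cons, conjTranspose_mul, List.length_cons]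
    have key : (rest.prod)ᴴ * Lᴴ * M * (L * rest.prod)
        = (rest.prod)ᴴ * (Lᴴ * M * L) * rest.prod := by
      simp only [Matrix.mul_assoc]
    rw [key]
    have step := conj_layer (d := d) (hl L List.mem_cons_self) hM
    have := ih (fun L' hL' => hl L' (List.mem_cons_of_mem _ hL')) (t + 1) _ step
    have harith : t + 1 + rest.length = t + (rest.length + 1) := by omega
    rwa [harith] at this

end LightCone


section Unitary

variable {N : ℕ}

lemma unit_list : ∀ l : List (Matrix (Fin N → Fin d) (Fin N → Fin d) ℂ),
    (∀ A ∈ l, Aᴴ * A = 1 ∧ A * Aᴴ = 1) →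
    (l.prod)ᴴ * l.prod = 1 ∧ l.prod * (l.prod)ᴴ = 1 := by
  intro l
  induction l with
  | nil => intro _; simp
  | cons A t ih =>
    intro h
    obtain ⟨h1, h2⟩ := h A List.mem_cons_self
    obtain ⟨ih1, ih2⟩ := ih fun A' hA' => h A' (List.mem_cons_of_mem _ hA')
    constructor
    · rw [List.prod_cons, conjTranspose_mul, Matrix.mul_assoc,
        ← Matrix.mul_assoc Aᴴ, h1, Matrix.one_mul, ih1]
    · rw [List.prod_cons, conjTranspose_mul, Matrix.mul_assoc,
        ← Matrix.mul_assoc t.prod, ih2, Matrix.one_mul, h2]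

lemma layer_unit {L : Matrix (Fin N → Fin d) (Fin N → Fin d) ℂ} (hL : IsLayer L) :
    Lᴴ * L = 1 ∧ L * Lᴴ = 1 := by
  obtain ⟨m, G, S, _, huni, _, _, rfl⟩ := hL
  exact unit_list _ fun A hA => by
    obtain ⟨i, rfl⟩ := List.mem_ofFn.mp hA
    exact huni i

lemma circuit_unit {T : ℕ} {U : Matrix (Fin N → Fin d) (Fin N → Fin d) ℂ}
    (hU : IsCircuit T U) : Uᴴ * U = 1 ∧ U * Uᴴ = 1 := by
  obtain ⟨L, hL, rfl⟩ := hU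
  exact unit_list _ fun A hA => by
    obtain ⟨i, rfl⟩ := List.mem_ofFn.mp hA
    exact layer_unit (hL i)

lemma conj_circuit {T : ℕ} {U : Matrix (Fin N → Fin d) (Fin N → Fin d) ℂ}
    (hU : IsCircuit T U) {a : Fin N} {t : ℕ}
    {M : Matrix (Fin N → Fin d) (Fin N → Fin d) ℂ} (hM : SupportedOn M (ball a t)) :
    SupportedOn (Uᴴ * M * U) (ball a (t + T)) := by
  obtain ⟨L, hL, rfl⟩ := hU
  have := conj_circuit_list (List.ofFn L)
    (fun L' hL' => by
      obtain ⟨i, rfl⟩ := List.mem_ofFn.mp hL'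
      exact hL i) t M hM
  rwa [List.length_ofFn] at this

end Unitary

section Expval

variable {N : ℕ}

lemma expval_eq (M : Matrix (Fin N → Fin d) (Fin N → Fin d) ℂ) (ψ : (Fin N → Fin d) → ℂ) :
    expval M ψ = star ψ ⬝ᵥ M *ᵥ ψ := rfl

lemma expval_conj (U M : Matrix (Fin N → Fin d) (Fin N → Fin d) ℂ)
    (ψ : (Fin N → Fin d) → ℂ) :
    expval (Uᴴ * M * U) ψ = expval M (U *ᵥ ψ) := by
  rw [expval_eq, expval_eq]
  rw [show Uᴴ * M * U = Uᴴ * (M * U) from by rw [Matrix.mul_assoc]]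
  rw [← Matrix.mulVec_mulVec, Matrix.dotProduct_mulVec, ← Matrix.star_mulVec,
    ← Matrix.mulVec_mulVec]

lemma siteOp_supported (O : Matrix (Fin d) (Fin d) ℂ) (a : Fin N) :
    SupportedOn (siteOp O a) (ball a 0) := by
  have ha : a ∈ ball a 0 := mem_ball.mpr (by omega)
  have hb : ∀ k : Fin N, k ∈ ball a 0 ↔ k = a := by
    intro k
    rw [mem_ball]
    constructor
    · rintro ⟨h1, h2⟩
      exact Fin.ext (by omega)
    · rintro rfl
      omega
  refine ⟨fun p q => O (p ⟨a, ha⟩) (q ⟨a, ha⟩), fun x y => ?_⟩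
  show (if ∀ k, k ≠ a → x k = y k then O (x a) (y a) else 0) = _
  refine if_congr ?_ rfl rfl
  constructor
  · intro h k hk
    exact h k fun hka => hk ((hb k).mpr hka)
  · intro h k hk
    exact h k fun hkb => hk ((hb k).mp hkb)

lemma ball_disjoint {a b : Fin N} {T : ℕ} (hab : (a : ℕ) + 2 * T < (b : ℕ)) :
    Disjoint (ball a T) (ball b T) := by
  rw [Finset.disjoint_left]
  intro k hk hk'
  rw [mem_ball] at hk hk'
  omega

lemma expval_double (M : Matrix (Fin N → Fin d) (Fin N → Fin d) ℂ)
    (u : Fin N → Fin d → ℂ) :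
    expval M (fun x => ∏ k, u k (x k))
      = ∑ x : Fin N → Fin d, ∑ y : Fin N → Fin d,
          (∏ k, (starRingEnd ℂ) (u k (x k))) * M x y * (∏ k, u k (y k)) := by
  simp only [expval, Matrix.mulVec, dotProduct, Finset.mul_sum]
  refine Finset.sum_congr rfl fun x _ => Finset.sum_congr rfl fun y _ => ?_
  rw [map_prod]
  ring

set_option maxHeartbeats 1600000 in
lemma expval_factor {A B : Matrix (Fin N → Fin d) (Fin N → Fin d) ℂ}
    {SA SB : Finset (Fin N)}
    (hA : SupportedOn A SA) (hB : SupportedOn B SB) (hdisj : Disjoint SA SB)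
    (u : Fin N → Fin d → ℂ) (hu : ∀ k, ∑ i, Complex.normSq (u k i) = 1) :
    expval (A * B) (fun x => ∏ k, u k (x k))
      = expval A (fun x => ∏ k, u k (x k)) * expval B (fun x => ∏ k, u k (x k)) := by
  obtain ⟨gA, hgA⟩ := hA
  obtain ⟨gB, hgB⟩ := hB
  have hvw : ∀ k, ∑ i, (starRingEnd ℂ) (u k i) * u k i = 1 := by
    intro k
    have h1 : ∀ i, (starRingEnd ℂ) (u k i) * u k i = ((Complex.normSq (u k i) : ℝ) : ℂ) := by
      intro i
      rw [mul_comm, Complex.mul_conj]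
    calc ∑ i, (starRingEnd ℂ) (u k i) * u k i
        = ∑ i, ((Complex.normSq (u k i) : ℝ) : ℂ) := Finset.sum_congr rfl fun i _ => h1 i
      _ = ((∑ i, Complex.normSq (u k i) : ℝ) : ℂ) := by rw [Complex.ofReal_sum]
      _ = 1 := by rw [hu k]; norm_num
  rw [expval_double, expval_double, expval_double]
  have hAB := mul_apply_disjoint gA gB hgA hgB hdisj
  simp only [hAB, hgA, hgB]
  have hc := coreSplit SA SB hdisj (fun k i => (starRingEnd ℂ) (u k i)) u hvw gA gB
  convert hc using 7

end Expval

end LC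

/-- strict light cone of finite-depth circuits. For a state `ψ` obtained by
applying a depth-`T` nearest-neighbor circuit to a product of unit vectors, the two-point
function of single-site operators at sites `a` and `b` with `b - a > 2T` factorizes. -/
theorem twoPoint_factorizes_of_depth_circuit {N d T : ℕ}
    (U : Matrix (Fin N → Fin d) (Fin N → Fin d) ℂ) (hU : IsCircuit T U)
    (u : Fin N → Fin d → ℂ) (hu : ∀ k, ∑ i, Complex.normSq (u k i) = 1)
    (O O' : Matrix (Fin d) (Fin d) ℂ) (a b : Fin N)
    (hab : (a : ℕ) + 2 * T < (b : ℕ)) :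
    expval (siteOp O a * siteOp O' b) (U.mulVec fun x => ∏ k, u k (x k))
      = expval (siteOp O a) (U.mulVec fun x => ∏ k, u k (x k))
        * expval (siteOp O' b) (U.mulVec fun x => ∏ k, u k (x k)) := by
  have hA' : SupportedOn (Uᴴ * siteOp O a * U) (LC.ball a T) := by
    have := LC.conj_circuit hU (LC.siteOp_supported O a)
    rwa [Nat.zero_add] at this
  have hB' : SupportedOn (Uᴴ * siteOp O' b * U) (LC.ball b T) := by
    have := LC.conj_circuit hU (LC.siteOp_supported O' b)
    rwa [Nat.zero_add] at this
  have hdisj : Disjoint (LC.ball a T) (LC.ball b T) := LC.ball_disjoint hab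
  have hunit := LC.circuit_unit hU
  have split : Uᴴ * (siteOp O a * siteOp O' b) * U
      = (Uᴴ * siteOp O a * U) * (Uᴴ * siteOp O' b * U) := by
    have h1 : U * (Uᴴ * (siteOp O' b * U)) = siteOp O' b * U := by
      rw [← Matrix.mul_assoc, hunit.2, Matrix.one_mul]
    simp only [Matrix.mul_assoc]
    rw [h1]
  calc expval (siteOp O a * siteOp O' b) (U.mulVec fun x => ∏ k, u k (x k))
      = expval (Uᴴ * (siteOp O a * siteOp O' b) * U) (fun x => ∏ k, u k (x k)) :=
        (LC.expval_conj _ _ _).symm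
    _ = expval ((Uᴴ * siteOp O a * U) * (Uᴴ * siteOp O' b * U)) (fun x => ∏ k, u k (x k)) := by
        rw [split]
    _ = expval (Uᴴ * siteOp O a * U) (fun x => ∏ k, u k (x k))
          * expval (Uᴴ * siteOp O' b * U) (fun x => ∏ k, u k (x k)) :=
        LC.expval_factor hA' hB' hdisj u hu
    _ = _ := by rw [LC.expval_conj, LC.expval_conj]
end
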